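/- Let E be the vector space ℓ∞ of bounded real sequences, regarded as a linear subspace of ℝ^ω = (ℕ → ℝ) and equipped with the topology induced from the product topology on ℝ^ω. Then every vector subspace F of E that is complete with respect to the uniformity induced from ℝ^ω is finite-dimensional. In particular, E does not contain an infinite-dimensional Fréchet subspace. -/
import Mathlib

/-- Let `E = ℓ∞` be the space of bounded real sequences regarded as a linear subspace of
`ℝ^ω = (ℕ → ℝ)` with the induced (product) topology.  Every vector subspace `F` of `E`
(i.e. every submodule of `ℕ → ℝ` consisting of bounded sequences) that is complete with
respect to the uniformity induced from `ℝ^ω` is finite-dimensional.  In particular `E`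
does not contain an infinite-dimensional Fréchet subspace. -/
theorem complete_subspace_of_linfty_in_product_topology_finiteDimensional
    (F : Submodule ℝ (ℕ → ℝ))
    (hF_bdd : ∀ x ∈ F, ∃ C : ℝ, ∀ n : ℕ, |x n| ≤ C)
    (hF_complete : IsComplete (F : Set (ℕ → ℝ))) :
    FiniteDimensional ℝ F := by
  classical
  letI : MetricSpace (ℕ → ℝ) := PiCountable.metricSpace
  haveI : CompleteSpace F := completeSpace_coe_iff_isComplete.2 hF_complete
  -- the closed sets of sequences bounded by `n`
  set K : ℕ → Set F := fun n => {x : F | ∀ i, |(x : ℕ → ℝ) i| ≤ n} with hKdef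
  have hKclosed : ∀ n, IsClosed (K n) := by
    intro n
    have : K n = (fun x : F => (x : ℕ → ℝ)) ⁻¹' (⋂ i, {y : ℕ → ℝ | |y i| ≤ n}) := by
      ext x; simp [hKdef]
    rw [this]
    refine IsClosed.preimage continuous_subtype_val ?_
    refine isClosed_iInter fun i => ?_
    have : Continuous fun y : ℕ → ℝ => |y i| := (continuous_apply i).abs
    exact isClosed_le this continuous_const
  have hKcover : (⋃ n, K n) = Set.univ := by
    ext x
    simp only [Set.mem_iUnion, Set.mem_univ, iff_true]
    obtain ⟨C, hC⟩ := hF_bdd x x.2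
    obtain ⟨n, hn⟩ := exists_nat_ge C
    exact ⟨n, fun i => (hC i).trans hn⟩
  obtain ⟨n, hn⟩ := nonempty_interior_of_iUnion_of_closed hKclosed hKcover
  obtain ⟨x₀, hx₀⟩ := hn
  -- get an open set `U` of the product space
  obtain ⟨U, hUopen, hUeq⟩ := isOpen_induced_iff.1 (isOpen_interior (s := K n))
  have hx₀U : (x₀ : ℕ → ℝ) ∈ U := by
    have : x₀ ∈ (fun x : F => (x : ℕ → ℝ)) ⁻¹' U := by rw [hUeq]; exact hx₀
    exact this
  obtain ⟨s, u, hu, hpi⟩ := isOpen_pi_iff.1 hUopen _ hx₀U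
  -- key claim: any element of F vanishing on s is zero
  have key : ∀ x ∈ F, (∀ i ∈ s, x i = 0) → x = 0 := by
    intro x hx hxs
    have hmem : ∀ t : ℝ, ∀ i : ℕ, |(x₀ : ℕ → ℝ) i + t * x i| ≤ n := by
      intro t
      have hFmem : (x₀ : ℕ → ℝ) + t • x ∈ F := F.add_mem x₀.2 (F.smul_mem t hx)
      have hU : (x₀ : ℕ → ℝ) + t • x ∈ U := by
        apply hpi
        intro i hi
        have h1 : ((x₀ : ℕ → ℝ) + t • x) i = (x₀ : ℕ → ℝ) i := by
          simp [hxs i hi]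
        rw [h1]; exact (hu i hi).2
      have hKn : (⟨(x₀ : ℕ → ℝ) + t • x, hFmem⟩ : F) ∈ interior (K n) := by
        rw [← hUeq]; exact hU
      have := interior_subset hKn
      intro i
      simpa using this i
    funext i
    by_contra hne
    have hxi : x i ≠ 0 := fun h => hne (by simp [h])
    set t : ℝ := (|(x₀ : ℕ → ℝ) i| + n + 1) / |x i| with ht
    have hpos : 0 < |x i| := abs_pos.2 hxi
    have h1 : |t * x i| = |(x₀ : ℕ → ℝ) i| + n + 1 := by
      have hnum : (0:ℝ) ≤ |(x₀ : ℕ → ℝ) i| + n + 1 := by positivity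
      rw [abs_mul, abs_div, abs_abs, abs_of_nonneg hnum, div_mul_cancel₀ _ (ne_of_gt hpos)]
    have h2 : |t * x i| ≤ |(x₀ : ℕ → ℝ) i| + n := by
      have := hmem t i
      calc |t * x i| = |((x₀ : ℕ → ℝ) i + t * x i) - (x₀ : ℕ → ℝ) i| := by ring_nf
        _ ≤ |(x₀ : ℕ → ℝ) i + t * x i| + |(x₀ : ℕ → ℝ) i| := abs_sub _ _
        _ ≤ n + |(x₀ : ℕ → ℝ) i| := by linarith
        _ = |(x₀ : ℕ → ℝ) i| + n := by ring
    rw [h1] at h2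
    linarith
  -- now F injects into a finite product
  let f : F →ₗ[ℝ] (s → ℝ) := LinearMap.pi fun i => (LinearMap.proj (i : ℕ)).comp F.subtype
  have hinj : Function.Injective f := by
    rw [← LinearMap.ker_eq_bot, LinearMap.ker_eq_bot']
    intro m hm
    have hcoords : ∀ i ∈ s, (m : ℕ → ℝ) i = 0 := by
      intro i hi
      exact congrFun hm ⟨i, hi⟩
    exact Subtype.ext (key (m : ℕ → ℝ) m.2 hcoords)
  exact FiniteDimensional.of_injective f hinj
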